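/- (Influence function of the saddlepoint, ż₀.) Let t > 0, x ∈ ℝ, and set z₀ = (t − 1)/(2t). Suppose z : ℝ → ℝ is a function with z(0) = z₀, z is differentiable at 0, and there is a neighborhood of 0 such that for all ε in it one has z(ε) < 1/2 and ∫_ℝ e^{z(ε) y²} ( y² − t ) d[(1−ε)·Φ_{0,1} + ε·δ_x](y) = 0 (the contaminated saddlepoint equation). Then z′(0) = (1/2)·t^{−5/2}·e^{ (t−1) x² / (2t) }·( t − x² ). -/

import Mathlib

open MeasureTheory ProbabilityTheory Real Set Filter

lemma integral_sq_mul_exp_neg_mul_sq {b : ℝ} (hb : 0 < b) :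
    ∫ y : ℝ, y ^ 2 * Real.exp (-b * y ^ 2) = Real.sqrt (π / b) / (2 * b) := by
  have hint2 : Integrable fun y : ℝ => y ^ 2 * Real.exp (-b * y ^ 2) := by
    simpa [Real.rpow_natCast] using integrable_rpow_mul_exp_neg_mul_sq hb (s := 2) (by norm_num)
  have hint1 : Integrable fun y : ℝ => Real.exp (-b * y ^ 2) := integrable_exp_neg_mul_sq hb
  set g : ℝ → ℝ := fun y => y * Real.exp (-b * y ^ 2) with hg
  set h : ℝ → ℝ := fun y => Real.exp (-b * y ^ 2) - 2 * b * (y ^ 2 * Real.exp (-b * y ^ 2)) with hh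
  have hderiv : ∀ y : ℝ, HasDerivAt g (h y) y := by
    intro y
    have h1 : HasDerivAt (fun y : ℝ => -b * y ^ 2) (-b * (2 * y)) y := by
      simpa using ((hasDerivAt_pow 2 y).const_mul (-b))
    have h2 : HasDerivAt (fun y : ℝ => Real.exp (-b * y ^ 2))
        (Real.exp (-b * y ^ 2) * (-b * (2 * y))) y := h1.exp
    have := (hasDerivAt_id y).mul h2
    refine this.congr_deriv (Eq.symm ?_)
    simp only [hh, id_eq, one_mul]
    ring
  have hhint : Integrable h := hint1.sub (hint2.const_mul _)
  have htop : Tendsto g atTop (nhds 0) := by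
    have h0 : Tendsto (fun x : ℝ => Real.exp (-(1/2) * x)) atTop (nhds 0) :=
      Real.tendsto_exp_atBot.comp (tendsto_id.const_mul_atTop_of_neg (by norm_num))
    have := (rpow_mul_exp_neg_mul_sq_isLittleO_exp_neg hb 1).tendsto_zero_of_tendsto h0
    exact this.congr fun y => by simp [hg, neg_mul]
  have hbot : Tendsto g atBot (nhds 0) := by
    have : Tendsto (fun y : ℝ => g (-y)) atTop (nhds 0) := by
      have : (fun y : ℝ => g (-y)) = fun y => -g y := by
        funext y; simp [hg]
      rw [this]
      simpa using htop.neg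
    have := this.comp tendsto_neg_atBot_atTop
    simpa [Function.comp_def] using this
  have hIoi : ∫ y in Ioi (0:ℝ), h y = 0 - g 0 :=
    integral_Ioi_of_hasDerivAt_of_tendsto' (fun y _ => hderiv y) hhint.integrableOn htop
  have hIic : ∫ y in Iic (0:ℝ), h y = g 0 - 0 :=
    integral_Iic_of_hasDerivAt_of_tendsto' (fun y _ => hderiv y) hhint.integrableOn hbot
  have hsplit : ∫ y, h y = 0 := by
    rw [← intervalIntegral.integral_Iic_add_Ioi (μ := volume) (b := (0:ℝ)) hhint.integrableOn hhint.integrableOn,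
      hIoi, hIic]
    ring
  have : (∫ y : ℝ, Real.exp (-b * y ^ 2)) - 2 * b * ∫ y : ℝ, y ^ 2 * Real.exp (-b * y ^ 2) = 0 := by
    rw [← integral_const_mul, ← integral_sub hint1 (hint2.const_mul _)]
    exact hsplit
  rw [integral_gaussian] at this
  field_simp at this ⊢
  linarith

lemma gauss_int {t w : ℝ} (hw : w < 1/2) :
    ∫ y, Real.exp (w * y ^ 2) * (y ^ 2 - t) ∂(gaussianReal 0 1)
      = ((1 - 2*w)⁻¹ - t) / Real.sqrt (1 - 2*w) := by
  have hb : 0 < 1/2 - w := by linarith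
  set b := 1/2 - w with hbdef
  have hmeas : Measurable fun y : ℝ => (gaussianPDFReal 0 1 y).toNNReal :=
    (measurable_gaussianPDFReal 0 1).real_toNNReal
  have h1 : ∫ y, Real.exp (w * y ^ 2) * (y ^ 2 - t) ∂(gaussianReal 0 1)
      = ∫ y, gaussianPDFReal 0 1 y * (Real.exp (w * y ^ 2) * (y ^ 2 - t)) := by
    rw [gaussianReal_of_var_ne_zero 0 one_ne_zero]
    rw [show gaussianPDF 0 1 = fun x => ((gaussianPDFReal 0 1 x).toNNReal : ENNReal) from rfl]
    rw [integral_withDensity_eq_integral_smul hmeas]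
    congr 1; funext y
    simp [NNReal.smul_def, Real.coe_toNNReal _ (gaussianPDFReal_nonneg 0 1 y)]
  have h2 : ∀ y : ℝ, gaussianPDFReal 0 1 y * (Real.exp (w * y ^ 2) * (y ^ 2 - t))
      = (Real.sqrt (2*π))⁻¹ * (y ^ 2 * Real.exp (-b * y^2) - t * Real.exp (-b*y^2)) := by
    intro y
    rw [gaussianPDFReal]
    have hexp : rexp (-(y-0)^2/(2*(1:NNReal))) * rexp (w*y^2) = rexp (-b*y^2) := by
      rw [← Real.exp_add]
      congr 1
      rw [hbdef]
      push_cast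
      ring
    push_cast
    calc (√(2 * π * (1:NNReal)))⁻¹ * rexp (-(y - 0) ^ 2 / (2 * (1:NNReal)))
          * (rexp (w * y ^ 2) * (y ^ 2 - t))
        = (√(2 * π * (1:NNReal)))⁻¹ * ((rexp (-(y-0)^2/(2*(1:NNReal))) * rexp (w*y^2)) * (y ^ 2 - t)) := by
          ring
      _ = (√(2*π))⁻¹ * (y ^ 2 * Real.exp (-b * y^2) - t * Real.exp (-b*y^2)) := by
          rw [hexp]; push_cast; rw [mul_one]; ring
  rw [h1]
  simp_rw [h2]
  have hint2 : Integrable fun y : ℝ => y ^ 2 * Real.exp (-b * y ^ 2) := by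
    simpa [Real.rpow_natCast] using integrable_rpow_mul_exp_neg_mul_sq hb (s := 2) (by norm_num)
  have hint1 : Integrable fun y : ℝ => Real.exp (-b * y ^ 2) := integrable_exp_neg_mul_sq hb
  rw [integral_const_mul, integral_sub hint2 (hint1.const_mul t), integral_const_mul,
    integral_sq_mul_exp_neg_mul_sq hb, integral_gaussian]
  have key : (Real.sqrt (2*π))⁻¹ * Real.sqrt (π/b) = (Real.sqrt (2*b))⁻¹ := by
    rw [← Real.sqrt_inv, ← Real.sqrt_mul (by positivity), ← Real.sqrt_inv]
    congr 1
    have : π ≠ 0 := pi_ne_zero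
    field_simp
  have h2b : (0:ℝ) < Real.sqrt (2*b) := Real.sqrt_pos.mpr (by linarith)
  rw [show (1:ℝ) - 2*w = 2*b by rw [hbdef]; ring]
  calc (√(2 * π))⁻¹ * (√(π / b) / (2 * b) - t * √(π / b))
      = ((√(2*π))⁻¹ * √(π/b)) / (2*b) - t * ((√(2*π))⁻¹ * √(π/b)) := by ring
    _ = (√(2*b))⁻¹ / (2*b) - t * (√(2*b))⁻¹ := by rw [key]
    _ = ((2*b)⁻¹ - t) / √(2*b) := by field_simp

theorem stmt12 (t x : ℝ) (ht : 0 < t) (z : ℝ → ℝ)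
    (hz0 : z 0 = (t - 1) / (2 * t))
    (hdiff : DifferentiableAt ℝ z 0)
    (heq : ∀ᶠ ε in nhds (0 : ℝ), z ε < 1 / 2 ∧
      (1 - ε) * (∫ y, Real.exp (z ε * y ^ 2) * (y ^ 2 - t) ∂(gaussianReal 0 1))
        + ε * (Real.exp (z ε * x ^ 2) * (x ^ 2 - t)) = 0) :
    deriv z 0
      = (1 / 2) * t ^ (-(5 : ℝ) / 2) * Real.exp ((t - 1) * x ^ 2 / (2 * t))
        * (t - x ^ 2) := by
  have ht0 : t ≠ 0 := ht.ne'
  set g : ℝ → ℝ := fun w => ((1 - 2*w)⁻¹ - t) / Real.sqrt (1 - 2*w) with hgdef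
  have hu0 : 1 - 2 * z 0 = t⁻¹ := by rw [hz0]; field_simp; ring
  have hu0pos : (0:ℝ) < 1 - 2 * z 0 := by rw [hu0]; positivity
  have hgz0 : g (z 0) = 0 := by
    simp only [hgdef, hu0, inv_inv, sub_self, zero_div]
  have hgd : HasDerivAt g (2 * t^2 * Real.sqrt t) (z 0) := by
    have hu : HasDerivAt (fun w : ℝ => 1 - 2*w) (-2) (z 0) := by
      simpa using ((hasDerivAt_id (z 0)).const_mul (2:ℝ)).const_sub 1
    have hp : HasDerivAt (fun w : ℝ => (1 - 2*w)⁻¹ - t)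
        (-(-2) / (1 - 2 * z 0) ^ 2) (z 0) := by
      exact ((hu.inv hu0pos.ne').sub_const t)
    have hq : HasDerivAt (fun w : ℝ => Real.sqrt (1 - 2*w))
        (1 / (2 * Real.sqrt (1 - 2 * z 0)) * (-2)) (z 0) := by
      convert (hu.sqrt hu0pos.ne') using 1; ring
    have hsq : Real.sqrt (1 - 2 * z 0) ≠ 0 := by
      positivity
    have := hp.div hq hsq
    refine this.congr_deriv (Eq.symm ?_)
    have hst : Real.sqrt (1 - 2 * z 0) = (Real.sqrt t)⁻¹ := by
      rw [hu0, Real.sqrt_inv]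
    have hstpos : (0:ℝ) < Real.sqrt t := Real.sqrt_pos.mpr ht
    have h2 : Real.sqrt t * Real.sqrt t = t := Real.mul_self_sqrt ht.le
    rw [hu0, Real.sqrt_inv, inv_inv, sub_self, zero_mul, sub_zero]
    field_simp
  have hzd : HasDerivAt z (deriv z 0) 0 := hdiff.hasDerivAt
  have hcomp : HasDerivAt (fun ε => g (z ε)) (2 * t^2 * Real.sqrt t * deriv z 0) 0 :=
    hgd.comp 0 hzd
  have h1 : HasDerivAt (fun ε : ℝ => 1 - ε) (-1) 0 := by
    simpa using ((hasDerivAt_id (0:ℝ)).const_mul (1:ℝ)).const_sub 1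
  have hA : HasDerivAt (fun ε => (1 - ε) * g (z ε))
      ((-1) * g (z 0) + (1 - 0) * (2 * t^2 * Real.sqrt t * deriv z 0)) 0 := h1.mul hcomp
  have hB : HasDerivAt (fun ε => Real.exp (z ε * x ^ 2) * (x ^ 2 - t))
      (Real.exp (z 0 * x ^ 2) * (deriv z 0 * x ^ 2) * (x ^ 2 - t)) 0 :=
    ((hzd.mul_const (x^2)).exp).mul_const _
  have hC : HasDerivAt (fun ε : ℝ => ε * (Real.exp (z ε * x ^ 2) * (x ^ 2 - t)))
      (1 * (Real.exp (z 0 * x ^ 2) * (x ^ 2 - t))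
        + 0 * (Real.exp (z 0 * x ^ 2) * (deriv z 0 * x ^ 2) * (x ^ 2 - t))) 0 := by
    exact (hasDerivAt_id' (0:ℝ)).fun_mul hB
  have hH : HasDerivAt
      (fun ε => (1 - ε) * g (z ε) + ε * (Real.exp (z ε * x ^ 2) * (x ^ 2 - t)))
      ((-1) * g (z 0) + (1 - 0) * (2 * t^2 * Real.sqrt t * deriv z 0)
        + (1 * (Real.exp (z 0 * x ^ 2) * (x ^ 2 - t))
        + 0 * (Real.exp (z 0 * x ^ 2) * (deriv z 0 * x ^ 2) * (x ^ 2 - t)))) 0 := hA.add hC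
  have hHeq : (fun ε => (1 - ε) * g (z ε) + ε * (Real.exp (z ε * x ^ 2) * (x ^ 2 - t)))
      =ᶠ[nhds (0:ℝ)] (fun _ => (0:ℝ)) := by
    filter_upwards [heq] with ε hε
    have h2 := hε.2
    rw [gauss_int hε.1] at h2
    exact h2
  have hderiv0 : deriv
      (fun ε => (1 - ε) * g (z ε) + ε * (Real.exp (z ε * x ^ 2) * (x ^ 2 - t))) 0 = 0 := by
    rw [Filter.EventuallyEq.deriv_eq hHeq]
    simp
  have hHd := hH.deriv
  rw [hderiv0] at hHd
  rw [hgz0] at hHd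
  have hst : (0:ℝ) < Real.sqrt t := Real.sqrt_pos.mpr ht
  have key : deriv z 0 = Real.exp (z 0 * x^2) * (t - x^2) / (2*t^2*Real.sqrt t) := by
    rw [eq_div_iff (by positivity)]
    nlinarith [hHd]
  have hz0x : z 0 * x^2 = (t-1)*x^2/(2*t) := by rw [hz0]; ring
  have hrpow : t ^ (-(5:ℝ)/2) = (t^2 * Real.sqrt t)⁻¹ := by
    rw [show (-(5:ℝ)/2) = -((5:ℝ)/2) by ring, Real.rpow_neg ht.le]
    congr 1
    rw [show ((5:ℝ)/2) = ((2:ℕ):ℝ) + (1/2:ℝ) by norm_num, Real.rpow_add ht,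
      Real.rpow_natCast, ← Real.rpow_natCast t 2, Real.rpow_natCast]
    rw [← Real.sqrt_eq_rpow]
  rw [key, hz0x, hrpow]
  field_simp
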